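/- arXiv:0806.0832 — 2 statements merged into one kernel-verified Lean document; each statement's English description precedes it below -/
import Mathlib

section
/- Let C be an abelian category (or any additive category) and F, G : Mod R → C right exact functors commuting with arbitrary direct sums. If τ, τ' : F → G are natural transformations with τ_R = τ'_R (their components at the right R-module R agree), then τ = τ'. -/
open CategoryTheory CategoryTheory.Limits

universe u

/-- Natural transformations between right exact functors `Mod R ⥤ C` commuting with
direct sums are determined by their component at the right `R`-module `R`.
(Right `R`-modules are left `Rᵐᵒᵖ`-modules.) -/
theorem natTrans_ext_of_app_self_eq
    (R : Type u) [Ring R] {C : Type*} [Category.{u} C] [Abelian C]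
    (F G : ModuleCat.{u} Rᵐᵒᵖ ⥤ C)
    [PreservesFiniteColimits F] [PreservesFiniteColimits G]
    [∀ ι : Type u, PreservesColimitsOfShape (Discrete ι) F]
    [∀ ι : Type u, PreservesColimitsOfShape (Discrete ι) G]
    (τ τ' : F ⟶ G)
    (h : τ.app (ModuleCat.of Rᵐᵒᵖ Rᵐᵒᵖ) = τ'.app (ModuleCat.of Rᵐᵒᵖ Rᵐᵒᵖ)) :
    τ = τ' := by
  ext M
  let D : Discrete (M : Type u) ⥤ ModuleCat.{u} Rᵐᵒᵖ :=
    Discrete.functor (fun _ => ModuleCat.of Rᵐᵒᵖ Rᵐᵒᵖ)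
  let P : ModuleCat.{u} Rᵐᵒᵖ := colimit D
  -- the transformations agree at the free module `P`
  have hP : τ.app P = τ'.app P := by
    apply (isColimitOfPreserves F (colimit.isColimit D)).hom_ext
    rintro ⟨m⟩
    have h1 := τ.naturality (colimit.ι D ⟨m⟩)
    have h2 := τ'.naturality (colimit.ι D ⟨m⟩)
    dsimp at h1 h2 ⊢
    rw [h1, h2]
    exact congrArg (· ≫ G.map (colimit.ι D ⟨m⟩)) h
  -- the canonical epimorphism from `P` to `M`
  let c : Cocone D := Cocone.mk M ⟨fun m => ModuleCat.ofHom (LinearMap.toSpanSingleton Rᵐᵒᵖ M m.as), by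
      rintro ⟨a⟩ ⟨b⟩ f
      obtain rfl : a = b := f.down.down
      simp [D]⟩
  let π : P ⟶ M := colimit.desc D c
  have hπ : Epi π := by
    rw [ModuleCat.epi_iff_surjective]
    intro m
    refine ⟨colimit.ι D ⟨m⟩ (1 : Rᵐᵒᵖ), ?_⟩
    have h3 : (colimit.ι D ⟨m⟩ ≫ π : _ ⟶ M) (1 : Rᵐᵒᵖ) = m := by
      rw [show colimit.ι D ⟨m⟩ ≫ π = c.ι.app ⟨m⟩ from colimit.ι_desc c ⟨m⟩]
      simp only [c]
      exact one_smul _ m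
    simpa [ModuleCat.comp_apply] using h3
  have h1 := τ.naturality π
  have h2 := τ'.naturality π
  have : F.map π ≫ τ.app M = F.map π ≫ τ'.app M := by
    rw [h1, h2, hP]
  exact (cancel_epi (F.map π)).1 this
end

section
/- (Watts's theorem, classical form) Let R and S be rings and F : Mod R → Mod S a right exact functor that commutes with direct limits (equivalently, with arbitrary direct sums). Then F is naturally isomorphic to − ⊗_R B, where B = F(R) is an R-S-bimodule with left R-action given by x·b := F(μ_x)(b) for μ_x left multiplication by x on R. -/
open CategoryTheory CategoryTheory.Limits MulOpposite

universe u

section Preamble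

variable (k : Type*) [CommRing k] (R : Type u) [Ring R] [Algebra k R]
variable (A : Type*) [Category.{u} A] [Preadditive A] [CategoryTheory.Linear k A]

/-- A left `R`-module in the `k`-linear category `A`: an object together with a
ring homomorphism `ρ : R → End 𝓕` which is `k`-linear, i.e. a `k`-algebra homomorphism. -/
structure LMod where
  X : A
  ρ : R →+* End X
  algebraMap_smul' : ∀ a : k, ρ (algebraMap k R a) = a • (𝟙 X)

variable {k R A}

/-- the `k`-module structure on right `R`-modules obtained by restriction of scalars -/
noncomputable instance (M : ModuleCat.{u} Rᵐᵒᵖ) : Module k M :=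
  RestrictScalars.module k Rᵐᵒᵖ M

instance (M : ModuleCat.{u} Rᵐᵒᵖ) : IsScalarTower k Rᵐᵒᵖ M :=
  RestrictScalars.isScalarTower k Rᵐᵒᵖ M

/-- The `k`-linear structure on the category of right `R`-modules, `a • m = m · γ(a)`. -/
noncomputable instance : CategoryTheory.Linear k (ModuleCat.{u} Rᵐᵒᵖ) where
  homModule _ _ := ModuleCat.Hom.instModule
  smul_comp := by
    intros
    ext
    dsimp only [ModuleCat.hom_comp, ModuleCat.hom_smul, LinearMap.comp_apply]
    rw [LinearMap.smul_apply, LinearMap.map_smul_of_tower]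
    rfl

/-- `Hom_A(𝓕, N)` is a right `R`-module via `α · r := ρ(r) ≫ α`. -/
instance homRMod (F : LMod k R A) (N : A) : Module Rᵐᵒᵖ (F.X ⟶ N) where
  smul r α := F.ρ r.unop ≫ α
  one_smul α := by show F.ρ _ ≫ α = α; simp
  mul_smul r s α := by
    show F.ρ _ ≫ α = F.ρ _ ≫ F.ρ _ ≫ α
    rw [unop_mul, map_mul, End.mul_def, Category.assoc]
  smul_zero r := by show _ ≫ (0 : F.X ⟶ N) = 0; simp
  smul_add r α β := by show _ ≫ (α + β) = _ ≫ α + _ ≫ β; simp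
  add_smul r s α := by
    show F.ρ _ ≫ α = F.ρ _ ≫ α + F.ρ _ ≫ α
    rw [MulOpposite.unop_add, map_add]; exact Preadditive.add_comp _ _ _ _ _ _
  zero_smul α := by show F.ρ _ ≫ α = 0; rw [MulOpposite.unop_zero, map_zero]; exact Limits.zero_comp

lemma homRMod_smul_def (F : LMod k R A) {N : A} (r : Rᵐᵒᵖ) (α : F.X ⟶ N) :
    r • α = F.ρ r.unop ≫ α := rfl

/-- The functor `Hom_A(𝓕, -) : A ⥤ Mod R`. -/
noncomputable def homFunctor (F : LMod k R A) : A ⥤ ModuleCat.{u} Rᵐᵒᵖ where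
  obj N := ModuleCat.of Rᵐᵒᵖ (F.X ⟶ N)
  map {N N'} f := ModuleCat.ofHom
    { toFun := fun α => α ≫ f
      map_add' := fun α β => Preadditive.add_comp _ _ _ _ _ _
      map_smul' := fun r α => by
        show (F.ρ r.unop ≫ α) ≫ f = F.ρ r.unop ≫ (α ≫ f)
        rw [Category.assoc] }
  map_id N := by apply ModuleCat.hom_ext; apply LinearMap.ext; intro α; exact Category.comp_id α
  map_comp f g := by apply ModuleCat.hom_ext; apply LinearMap.ext; intro α; exact (Category.assoc _ _ _).symm

/-- `R` as a right module over itself. -/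
noncomputable abbrev RR : ModuleCat.{u} Rᵐᵒᵖ := ModuleCat.of Rᵐᵒᵖ Rᵐᵒᵖ

variable (R) in
/-- left multiplication `μ_x` by `x` on `R`, a right `R`-module map -/
def mulMap (x : R) : (RR : ModuleCat.{u} Rᵐᵒᵖ) ⟶ RR := ModuleCat.ofHom {
  toFun r := op (x * r.unop)
  map_add' r s := by
    apply unop_injective
    show x * (r + s).unop = _
    rw [show (r + s).unop = r.unop + s.unop from rfl, mul_add]; rfl
  map_smul' s t := by
    apply unop_injective
    show x * (s • t).unop = ((s • op (x * t.unop)).unop)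
    rw [show (s • t).unop = t.unop * s.unop from rfl,
      show (s • op (x * t.unop)).unop = (x * t.unop) * s.unop from rfl, mul_assoc] }

/-- Morphisms `𝓕 → 𝓖` of left `R`-modules in `A` induce natural transformations
`Hom_A(𝓖,-) ⟶ Hom_A(𝓕,-)`. -/
noncomputable def homPre {F G : LMod k R A} (φ : F.X ⟶ G.X)
    (h : ∀ r : R, F.ρ r ≫ φ = φ ≫ G.ρ r) : homFunctor G ⟶ homFunctor F where
  app N := ModuleCat.ofHom
    { toFun := fun α => φ ≫ α
      map_add' := fun α β => Preadditive.comp_add _ _ _ _ _ _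
      map_smul' := fun r α => by
        show φ ≫ G.ρ r.unop ≫ α = F.ρ r.unop ≫ φ ≫ α
        rw [← Category.assoc, ← h, Category.assoc] }
  naturality N N' f := by apply ModuleCat.hom_ext; apply LinearMap.ext; intro α; exact (Category.assoc _ _ _).symm

/-- `M ⊗ φ` : the natural transformation `- ⊗_R 𝓕 ⟶ - ⊗_R 𝓖` induced by `φ : 𝓕 ⟶ 𝓖`,
obtained as the conjugate (mate) of `homPre φ`. -/
noncomputable def tensorMap {F G : LMod k R A} {TF TG : ModuleCat.{u} Rᵐᵒᵖ ⥤ A}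
    (adjF : TF ⊣ homFunctor F) (adjG : TG ⊣ homFunctor G) (φ : F.X ⟶ G.X)
    (h : ∀ r : R, F.ρ r ≫ φ = φ ≫ G.ρ r) : TF ⟶ TG :=
  (conjugateEquiv adjG adjF).symm (homPre φ h)

/-- The canonical map `ξ_𝓕 : 𝓕 ⟶ R ⊗_R 𝓕`. -/
noncomputable def xi {F : LMod k R A} {TF : ModuleCat.{u} Rᵐᵒᵖ ⥤ A}
    (adjF : TF ⊣ homFunctor F) : F.X ⟶ TF.obj RR :=
  (adjF.unit.app RR) (1 : Rᵐᵒᵖ)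

end Preamble


section WattsProof

variable {R : Type u} [Ring R] {S : Type u} [Ring S]

/-- The right `R`-module map `R ⟶ M`, `t ↦ t • m`, at the level of plain modules. -/
def wattsPhiAux (M : Type u) [AddCommGroup M] [Module Rᵐᵒᵖ M] (m : M) :
    Rᵐᵒᵖ →ₗ[Rᵐᵒᵖ] M where
  toFun t := t • m
  map_add' t s := add_smul t s m
  map_smul' s t := mul_smul s t m

/-- The right `R`-module map `R ⟶ M`, `t ↦ t • m`. -/
def wattsPhi (M : ModuleCat.{u} Rᵐᵒᵖ) (m : M) : (RR : ModuleCat.{u} Rᵐᵒᵖ) ⟶ M :=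
  ModuleCat.ofHom (wattsPhiAux M m)

lemma wattsPhi_apply (M : ModuleCat.{u} Rᵐᵒᵖ) (m : M) (t : Rᵐᵒᵖ) :
    wattsPhi M m t = t • m := rfl

lemma wattsPhi_one (M : ModuleCat.{u} Rᵐᵒᵖ) (m : M) :
    wattsPhi M m ((1 : Rᵐᵒᵖ)) = m := one_smul Rᵐᵒᵖ m

lemma wattsPhi_id : wattsPhi (RR : ModuleCat.{u} Rᵐᵒᵖ) ((1 : Rᵐᵒᵖ)) = 𝟙 RR := by
  apply ModuleCat.hom_ext
  refine LinearMap.ext fun (t : Rᵐᵒᵖ) => ?_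
  show t • (1 : Rᵐᵒᵖ) = t
  rw [smul_eq_mul, mul_one]

lemma wattsPhi_RR (t : Rᵐᵒᵖ) :
    wattsPhi (RR : ModuleCat.{u} Rᵐᵒᵖ) t = mulMap R t.unop := by
  apply ModuleCat.hom_ext
  refine LinearMap.ext fun (s : Rᵐᵒᵖ) => ?_
  show s • t = op (t.unop * s.unop)
  rw [smul_eq_mul, ← unop_mul, op_unop]

lemma wattsPhi_comp {M N : ModuleCat.{u} Rᵐᵒᵖ} (f : M ⟶ N) (m : M) :
    wattsPhi M m ≫ f = wattsPhi N (f m) := by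
  apply ModuleCat.hom_ext
  refine LinearMap.ext fun (t : Rᵐᵒᵖ) => ?_
  show f (t • m) = t • f m
  exact map_smul f.hom t m

lemma wattsPhi_smul (M : ModuleCat.{u} Rᵐᵒᵖ) (r : Rᵐᵒᵖ) (m : M) :
    wattsPhi M (r • m) = mulMap R r.unop ≫ wattsPhi M m := by
  apply ModuleCat.hom_ext
  refine LinearMap.ext fun (t : Rᵐᵒᵖ) => ?_
  show t • (r • m) = (op (r.unop * t.unop) : Rᵐᵒᵖ) • m
  rw [← mul_smul]
  congr 1

lemma wattsPhi_add (M : ModuleCat.{u} Rᵐᵒᵖ) (m m' : M) :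
    wattsPhi M (m + m') = wattsPhi M m + wattsPhi M m' := by
  apply ModuleCat.hom_ext
  refine LinearMap.ext fun (t : Rᵐᵒᵖ) => ?_
  show t • (m + m') = t • m + t • m'
  exact smul_add t m m'

variable (F : ModuleCat.{u} Rᵐᵒᵖ ⥤ ModuleCat.{u} Sᵐᵒᵖ) [F.Additive]
  (ρ : R →+* End (F.obj (RR : ModuleCat.{u} Rᵐᵒᵖ)))
  (hρ : ∀ x : R, ρ x = F.map (mulMap R x))
  (halg : ∀ a : ℤ, ρ (algebraMap ℤ R a) = a • 𝟙 (F.obj (RR : ModuleCat.{u} Rᵐᵒᵖ)))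

/-- The natural transformation `𝟭 ⟶ F ⋙ Hom_S(B, -)`, `m ↦ F (t ↦ t • m)`. -/
noncomputable def wattsW (M : ModuleCat.{u} Rᵐᵒᵖ) :
    M ⟶ (F ⋙ homFunctor (⟨F.obj RR, ρ, halg⟩ : LMod ℤ R (ModuleCat.{u} Sᵐᵒᵖ))).obj M := @ModuleCat.ofHom _ _ M
    ((F ⋙ homFunctor (⟨F.obj RR, ρ, halg⟩ : LMod ℤ R (ModuleCat.{u} Sᵐᵒᵖ))).obj M) _ _ _
    ((F ⋙ homFunctor (⟨F.obj RR, ρ, halg⟩ : LMod ℤ R (ModuleCat.{u} Sᵐᵒᵖ))).obj M).isModule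
    (show M →ₗ[Rᵐᵒᵖ]
    (F ⋙ homFunctor (⟨F.obj RR, ρ, halg⟩ : LMod ℤ R (ModuleCat.{u} Sᵐᵒᵖ))).obj M from {
  toFun m := F.map (wattsPhi M m)
  map_add' m m' := by
    show F.map (wattsPhi M (m + m')) = F.map (wattsPhi M m) + F.map (wattsPhi M m')
    rw [wattsPhi_add, F.map_add]
  map_smul' r m := by
    show F.map (wattsPhi M (r • m)) = ρ r.unop ≫ F.map (wattsPhi M m)
    rw [wattsPhi_smul, F.map_comp, hρ] })

lemma wattsW_apply (M : ModuleCat.{u} Rᵐᵒᵖ) (m : M) :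
    wattsW F ρ hρ halg M m = F.map (wattsPhi M m) := rfl

variable (T : ModuleCat.{u} Rᵐᵒᵖ ⥤ ModuleCat.{u} Sᵐᵒᵖ)
  (adj : T ⊣ homFunctor (⟨F.obj RR, ρ, halg⟩ : LMod ℤ R (ModuleCat.{u} Sᵐᵒᵖ)))

/-- The comparison natural transformation `T ⟶ F`. -/
noncomputable def wattsBeta : T ⟶ F where
  app M := (adj.homEquiv M (F.obj M)).symm (wattsW F ρ hρ halg M)
  naturality M N f := by
    apply (adj.homEquiv _ _).injective
    rw [adj.homEquiv_naturality_left, adj.homEquiv_naturality_right,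
      Equiv.apply_symm_apply, Equiv.apply_symm_apply]
    apply ModuleCat.hom_ext; apply LinearMap.ext; intro m
    show F.map (wattsPhi N (f m)) = F.map (wattsPhi M m) ≫ F.map f
    rw [← F.map_comp, wattsPhi_comp]

lemma wattsBeta_isIso_RR : IsIso ((wattsBeta F ρ hρ halg T adj).app RR) := by
  refine ⟨show F.obj RR ⟶ T.obj RR from adj.unit.app RR ((1 : Rᵐᵒᵖ)), ?_, ?_⟩
  · -- β ≫ ξ = 𝟙 (T.obj RR)
    apply (adj.homEquiv _ _).injective
    rw [adj.homEquiv_naturality_right, adj.homEquiv_id]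
    have e0 : adj.homEquiv RR (F.obj RR) ((wattsBeta F ρ hρ halg T adj).app RR)
        = wattsW F ρ hρ halg RR := Equiv.apply_symm_apply _ _
    rw [e0]
    apply ModuleCat.hom_ext
    refine LinearMap.ext fun (t : Rᵐᵒᵖ) => ?_
    show F.map (wattsPhi RR t) ≫ adj.unit.app RR ((1 : Rᵐᵒᵖ)) = adj.unit.app RR t
    rw [wattsPhi_RR, ← hρ]
    have h0 : (t • (1 : Rᵐᵒᵖ)) = t := by rw [smul_eq_mul, mul_one]
    have h2 : adj.unit.app RR t = t • (adj.unit.app RR ((1 : Rᵐᵒᵖ))) := by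
      conv_lhs => rw [← h0]
      exact map_smul (adj.unit.app RR).hom t ((1 : Rᵐᵒᵖ))
    rw [h2]
    rfl
  · -- ξ ≫ β = 𝟙 (F.obj RR)
    have e0 : adj.homEquiv RR (F.obj RR) ((wattsBeta F ρ hρ halg T adj).app RR)
        = wattsW F ρ hρ halg RR := Equiv.apply_symm_apply _ _
    have e1 := LinearMap.congr_fun (congrArg ModuleCat.Hom.hom e0) ((1 : Rᵐᵒᵖ))
    have e2 : adj.unit.app RR ((1 : Rᵐᵒᵖ)) ≫ (wattsBeta F ρ hρ halg T adj).app RR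
        = F.map (wattsPhi RR ((1 : Rᵐᵒᵖ))) := e1
    show adj.unit.app RR ((1 : Rᵐᵒᵖ)) ≫ _ = _
    rw [e2, wattsPhi_id, F.map_id]

end WattsProof

section WattsIso

open CategoryTheory.Limits

lemma watts_isIso_of_iso {C D : Type*} [Category C] [Category D] {T F : C ⥤ D}
    (β : T ⟶ F) {M M' : C} (e : M ≅ M') (h : IsIso (β.app M')) : IsIso (β.app M) := by
  have : β.app M = T.map e.hom ≫ β.app M' ≫ F.map e.inv := by
    rw [← Category.assoc, β.naturality, Category.assoc, ← F.map_comp, e.hom_inv_id,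
      F.map_id, Category.comp_id]
  rw [this]
  infer_instance

lemma watts_isIso_sigma {R S : Type u} [Ring R] [Ring S]
    {T F : ModuleCat.{u} Rᵐᵒᵖ ⥤ ModuleCat.{u} Sᵐᵒᵖ} (β : T ⟶ F)
    {ι : Type u} (f : ι → ModuleCat.{u} Rᵐᵒᵖ)
    [PreservesColimitsOfShape (Discrete ι) F] [PreservesColimitsOfShape (Discrete ι) T]
    (h : ∀ i, IsIso (β.app (f i))) : IsIso (β.app (∐ f)) := by
  haveI := h
  have key : sigmaComparison T f ≫ β.app (∐ f)
      = Limits.Sigma.map (fun i => β.app (f i)) ≫ sigmaComparison F f := by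
    apply Limits.Sigma.hom_ext
    intro i
    rw [ι_comp_sigmaComparison_assoc, Sigma.ι_map_assoc,
      ι_comp_sigmaComparison, β.naturality]
  have : β.app (∐ f) = inv (sigmaComparison T f) ≫
      (Limits.Sigma.map (fun i => β.app (f i)) ≫ sigmaComparison F f) := by
    rw [← key, IsIso.inv_hom_id_assoc]
  rw [this]
  infer_instance

lemma watts_isIso_cokernel {R S : Type u} [Ring R] [Ring S]
    {T F : ModuleCat.{u} Rᵐᵒᵖ ⥤ ModuleCat.{u} Sᵐᵒᵖ} (β : T ⟶ F)
    {X Y : ModuleCat.{u} Rᵐᵒᵖ} (d : X ⟶ Y) [T.Additive] [F.Additive]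
    [PreservesColimit (parallelPair d 0) T] [PreservesColimit (parallelPair d 0) F]
    (hX : IsIso (β.app X)) (hY : IsIso (β.app Y)) : IsIso (β.app (cokernel d)) := by
  haveI := hX; haveI := hY
  have key : cokernelComparison d T ≫ β.app (cokernel d)
      = cokernel.map (T.map d) (F.map d) (β.app X) (β.app Y) (β.naturality d) ≫
        cokernelComparison d F := by
    rw [← cancel_epi (cokernel.π (T.map d)), π_comp_cokernelComparison_assoc,
      β.naturality, ← Category.assoc, cokernel.π_desc, Category.assoc,
      π_comp_cokernelComparison]
  have : β.app (cokernel d) = inv (cokernelComparison d T) ≫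
      (cokernel.map (T.map d) (F.map d) (β.app X) (β.app Y) (β.naturality d) ≫
        cokernelComparison d F) := by
    rw [← key, IsIso.inv_hom_id_assoc]
  rw [this]
  haveI : IsIso (cokernel.map (T.map d) (F.map d) (β.app X) (β.app Y) (β.naturality d)) := by
    have h2 : cokernel.map (T.map d) (F.map d) (β.app X) (β.app Y) (β.naturality d) =
        (cokernel.mapIso (T.map d) (F.map d) (asIso (β.app X)) (asIso (β.app Y))
          (β.naturality d)).hom := rfl
    rw [h2]
    infer_instance
  infer_instance

end WattsIso

/-- **Watts's theorem (classical form).** A right exact functor `F : Mod R ⥤ Mod S`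
commuting with direct sums is naturally isomorphic to `- ⊗_R B` where `B = F(R)`,
an `R`-`S`-bimodule whose left `R`-action is `x • b = F(μ_x)(b)`.  Here `- ⊗_R B`
is (characterized as) a left adjoint of `Hom_S(B, -) : Mod S ⥤ Mod R`. -/
theorem classical_watts (R : Type u) [Ring R] (S : Type u) [Ring S]
    (F : ModuleCat.{u} Rᵐᵒᵖ ⥤ ModuleCat.{u} Sᵐᵒᵖ) [F.Additive]
    [PreservesFiniteColimits F]
    [∀ ι : Type u, PreservesColimitsOfShape (Discrete ι) F]
    (ρ : R →+* End (F.obj (RR : ModuleCat.{u} Rᵐᵒᵖ)))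
    (hρ : ∀ x : R, ρ x = F.map (mulMap R x))
    (halg : ∀ a : ℤ, ρ (algebraMap ℤ R a) = a • 𝟙 (F.obj (RR : ModuleCat.{u} Rᵐᵒᵖ)))
    (T : ModuleCat.{u} Rᵐᵒᵖ ⥤ ModuleCat.{u} Sᵐᵒᵖ)
    (adj : T ⊣ homFunctor (⟨F.obj RR, ρ, halg⟩ : LMod ℤ R (ModuleCat.{u} Sᵐᵒᵖ))) :
    Nonempty (F ≅ T) := by
  classical
  haveI : PreservesColimitsOfSize.{u, u} T := adj.leftAdjoint_preservesColimits
  haveI : PreservesColimitsOfSize.{0, 0} T := adj.leftAdjoint_preservesColimits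
  haveI : T.IsLeftAdjoint := adj.isLeftAdjoint
  haveI : PreservesBinaryBiproducts T :=
    preservesBinaryBiproducts_of_preservesBinaryCoproducts T
  haveI : T.Additive := Functor.additive_of_preservesBinaryBiproducts T
  let β : T ⟶ F := wattsBeta F ρ hρ halg T adj
  haveI hRR : IsIso (β.app RR) := wattsBeta_isIso_RR F ρ hρ halg T adj
  have hsig : ∀ (ι : Type u), IsIso (β.app (∐ fun _ : ι => (RR : ModuleCat.{u} Rᵐᵒᵖ))) := by
    intro ι
    exact watts_isIso_sigma β _ (fun _ => hRR)
  haveI hall : ∀ M : ModuleCat.{u} Rᵐᵒᵖ, IsIso (β.app M) := by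
    intro M
    let P : ModuleCat.{u} Rᵐᵒᵖ := ∐ (fun _ : M => (RR : ModuleCat.{u} Rᵐᵒᵖ))
    let p : P ⟶ M := Limits.Sigma.desc (fun m => wattsPhi M m)
    haveI hpe : Epi p := by
      rw [ModuleCat.epi_iff_surjective]
      intro m
      refine ⟨Limits.Sigma.ι (fun _ : M => (RR : ModuleCat.{u} Rᵐᵒᵖ)) m ((1 : Rᵐᵒᵖ)), ?_⟩
      have h1 : Limits.Sigma.ι (fun _ : M => (RR : ModuleCat.{u} Rᵐᵒᵖ)) m ≫ p = wattsPhi M m :=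
        Limits.Sigma.ι_desc _ _
      calc p (Limits.Sigma.ι (fun _ : M => (RR : ModuleCat.{u} Rᵐᵒᵖ)) m ((1 : Rᵐᵒᵖ)))
          = (Limits.Sigma.ι (fun _ : M => (RR : ModuleCat.{u} Rᵐᵒᵖ)) m ≫ p) ((1 : Rᵐᵒᵖ)) := rfl
        _ = wattsPhi M m ((1 : Rᵐᵒᵖ)) := by rw [h1]
        _ = m := wattsPhi_one M m
    let K : ModuleCat.{u} Rᵐᵒᵖ := kernel p
    let Q : ModuleCat.{u} Rᵐᵒᵖ := ∐ (fun _ : K => (RR : ModuleCat.{u} Rᵐᵒᵖ))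
    let q : Q ⟶ K := Limits.Sigma.desc (fun k => wattsPhi K k)
    haveI hqe : Epi q := by
      rw [ModuleCat.epi_iff_surjective]
      intro k
      refine ⟨Limits.Sigma.ι (fun _ : K => (RR : ModuleCat.{u} Rᵐᵒᵖ)) k ((1 : Rᵐᵒᵖ)), ?_⟩
      have h1 : Limits.Sigma.ι (fun _ : K => (RR : ModuleCat.{u} Rᵐᵒᵖ)) k ≫ q = wattsPhi K k :=
        Limits.Sigma.ι_desc _ _
      calc q (Limits.Sigma.ι (fun _ : K => (RR : ModuleCat.{u} Rᵐᵒᵖ)) k ((1 : Rᵐᵒᵖ)))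
          = (Limits.Sigma.ι (fun _ : K => (RR : ModuleCat.{u} Rᵐᵒᵖ)) k ≫ q) ((1 : Rᵐᵒᵖ)) := rfl
        _ = wattsPhi K k ((1 : Rᵐᵒᵖ)) := by rw [h1]
        _ = k := wattsPhi_one K k
    let d : Q ⟶ P := q ≫ kernel.ι p
    have hc2 := isCokernelEpiComp (Abelian.epiIsCokernelOfKernel _ (kernelIsKernel p)) q
      (rfl : d = q ≫ kernel.ι p)
    have e : M ≅ cokernel d :=
      hc2.coconePointUniqueUpToIso (colimit.isColimit (parallelPair d 0))
    have hcok : IsIso (β.app (cokernel d)) :=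
      watts_isIso_cokernel β d (hsig K) (hsig M)
    exact watts_isIso_of_iso β e hcok
  haveI : IsIso β := NatIso.isIso_of_isIso_app β
  exact ⟨(asIso β).symm⟩
end
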